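/- Let c ≥ 1 and n be integers with d = ⌈log₂ c⌉ and n > d. Then the set of values attained by g(x) = Σ_{i=0}^{d} 2^i x_i + 2^{d+1} Σ_{i=d+1}^{n} x_i, as x ranges over {0,1}^{n+1}, is exactly the set of integers {0, 1, 2, …, 2^{d+1}(n − d + 1) − 1}; i.e., the spectrum of the unshifted diagonal Hamiltonian consists of all integers from 0 to its maximum, jumping in integer steps of 1. -/

import Mathlib

/-- The unshifted diagonal Hamiltonian eigenvalue function
`g(x) = Σ_{i=0}^{d} 2^i x_i + 2^{d+1} Σ_{i=d+1}^{n} x_i` on bitstrings `x ∈ {0,1}^{n+1}`,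
where `d = ⌈log₂ c⌉ = Nat.clog 2 c`. -/
def gz (c n : ℕ) (x : Fin (n + 1) → Bool) : ℕ :=
  ∑ i : Fin (n + 1),
    (if (i : ℕ) ≤ Nat.clog 2 c then 2 ^ (i : ℕ) else 2 ^ (Nat.clog 2 c + 1)) *
      (if x i then 1 else 0)

lemma two_pow_sum (m : ℕ) : ∑ i ∈ Finset.range m, 2 ^ i = 2 ^ m - 1 := by
  induction m with
  | zero => simp
  | succ m ih =>
    rw [Finset.sum_range_succ, ih]
    have : 1 ≤ 2 ^ m := Nat.one_le_two_pow
    rw [pow_succ]; omega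

lemma bits_sum (m r : ℕ) :
    ∑ i ∈ Finset.range m, 2 ^ i * (if Nat.testBit r i then 1 else 0) = r % 2 ^ m := by
  induction m with
  | zero => simp [Nat.mod_one]
  | succ m ih =>
    rw [Finset.sum_range_succ, ih, Nat.mod_pow_succ]
    have h : r.testBit m = decide (r / 2 ^ m % 2 = 1) := Nat.testBit_eq_decide_div_mod_eq
    have h2 : r / 2 ^ m % 2 = 0 ∨ r / 2 ^ m % 2 = 1 := by omega
    rcases h2 with h2 | h2 <;> simp [h, h2]

/-- the set of values of `g` is exactly `{0, 1, …, 2^{d+1}(n − d + 1) − 1}`. -/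
theorem range_of_unshifted_diagonal_Hamiltonian
    (c n : ℕ) (hc : 1 ≤ c) (hn : Nat.clog 2 c < n) :
    Set.range (gz c n)
      = {k : ℕ | k < 2 ^ (Nat.clog 2 c + 1) * (n - Nat.clog 2 c + 1)} := by
  set d := Nat.clog 2 c with hd
  set D := 2 ^ (d + 1) with hD
  have hDpos : 0 < D := Nat.pow_pos (by norm_num)
  ext k
  simp only [Set.mem_range, Set.mem_setOf_eq]
  constructor
  · rintro ⟨x, rfl⟩
    have hle : gz c n x ≤ ∑ i ∈ Finset.range (n + 1),
        (if i ≤ d then 2 ^ i else D) := by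
      rw [gz, ← Fin.sum_univ_eq_sum_range (fun i => if i ≤ d then 2 ^ i else D) (n + 1)]
      apply Finset.sum_le_sum
      intro i _
      rcases x i with _ | _ <;> simp [hd, hD]
    have hsplit : ∑ i ∈ Finset.range (d + 1), (if i ≤ d then 2 ^ i else D)
        + ∑ i ∈ Finset.Ico (d + 1) (n + 1), (if i ≤ d then 2 ^ i else D)
        = ∑ i ∈ Finset.range (n + 1), (if i ≤ d then 2 ^ i else D) := by
      rw [Finset.range_eq_Ico, Finset.range_eq_Ico]
      exact Finset.sum_Ico_consecutive _ (by omega) (by omega)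
    have h1 : (∑ i ∈ Finset.range (d + 1), if i ≤ d then 2 ^ i else D) = D - 1 := by
      have e : ∀ i ∈ Finset.range (d + 1), (if i ≤ d then 2 ^ i else D) = 2 ^ i := by
        intro i hi; rw [Finset.mem_range] at hi; exact if_pos (by omega)
      rw [Finset.sum_congr rfl e]; exact two_pow_sum (d + 1)
    have h2 : (∑ i ∈ Finset.Ico (d + 1) (n + 1), if i ≤ d then 2 ^ i else D)
        = D * (n - d) := by
      have e : ∀ i ∈ Finset.Ico (d + 1) (n + 1), (if i ≤ d then 2 ^ i else D) = D := by
        intro i hi; rw [Finset.mem_Ico] at hi; exact if_neg (by omega)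
      rw [Finset.sum_congr rfl e, Finset.sum_const, Nat.card_Ico, smul_eq_mul]
      have e2 : n + 1 - (d + 1) = n - d := by omega
      rw [e2, Nat.mul_comm]
    have hfin : D * (n - d + 1) = D * (n - d) + D := by ring
    omega
  · intro hk
    obtain ⟨q, r, hrD, hqnd, hkdm⟩ :
        ∃ q r, r < D ∧ q ≤ n - d ∧ r + D * q = k := by
      refine ⟨k / D, k % D, Nat.mod_lt _ hDpos, ?_, Nat.mod_add_div k D⟩
      by_contra h
      have h1 : n - d + 1 ≤ k / D := by omega
      have h2 : D * (n - d + 1) ≤ D * (k / D) := Nat.mul_le_mul_left D h1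
      have h3 : D * (k / D) ≤ k := by
        rw [Nat.mul_comm]; exact Nat.div_mul_le_self k D
      omega
    refine ⟨fun i => if (i : ℕ) ≤ d then Nat.testBit r i else decide ((i : ℕ) ≤ d + q), ?_⟩
    have hrw : gz c n (fun i => if (i : ℕ) ≤ d then Nat.testBit r i
          else decide ((i : ℕ) ≤ d + q))
        = ∑ j ∈ Finset.range (n + 1), (if j ≤ d then 2 ^ j else D) *
            (if (if j ≤ d then Nat.testBit r j else decide (j ≤ d + q)) then 1 else 0) :=
      Fin.sum_univ_eq_sum_range
        (fun j => (if j ≤ d then 2 ^ j else D) *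
          (if (if j ≤ d then Nat.testBit r j else decide (j ≤ d + q)) then 1 else 0)) (n + 1)
    rw [hrw]
    set f : ℕ → ℕ := fun j => (if j ≤ d then 2 ^ j else D) *
        (if (if j ≤ d then Nat.testBit r j else decide (j ≤ d + q)) then 1 else 0) with hf
    have hsplit : ∑ i ∈ Finset.range (d + 1), f i + ∑ i ∈ Finset.Ico (d + 1) (n + 1), f i
        = ∑ i ∈ Finset.range (n + 1), f i := by
      rw [Finset.range_eq_Ico, Finset.range_eq_Ico]
      exact Finset.sum_Ico_consecutive _ (by omega) (by omega)
    have hsplit2 : ∑ i ∈ Finset.Ico (d + 1) (d + q + 1), f i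
          + ∑ i ∈ Finset.Ico (d + q + 1) (n + 1), f i
        = ∑ i ∈ Finset.Ico (d + 1) (n + 1), f i :=
      Finset.sum_Ico_consecutive _ (by omega) (by omega)
    have h1 : ∑ i ∈ Finset.range (d + 1), f i = r := by
      have e : ∀ i ∈ Finset.range (d + 1),
          f i = 2 ^ i * (if Nat.testBit r i then 1 else 0) := by
        intro i hi; rw [Finset.mem_range] at hi
        have h : i ≤ d := by omega
        simp only [hf, if_pos h]
      rw [Finset.sum_congr rfl e, bits_sum]
      exact Nat.mod_eq_of_lt hrD
    have h2 : ∑ i ∈ Finset.Ico (d + 1) (d + q + 1), f i = D * q := by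
      have e : ∀ i ∈ Finset.Ico (d + 1) (d + q + 1), f i = D := by
        intro i hi; rw [Finset.mem_Ico] at hi
        have ha : ¬ i ≤ d := by omega
        have hb : i ≤ d + q := by omega
        simp [hf, ha, hb]
      rw [Finset.sum_congr rfl e, Finset.sum_const, Nat.card_Ico, smul_eq_mul]
      have e2 : d + q + 1 - (d + 1) = q := by omega
      rw [e2, Nat.mul_comm]
    have h3 : ∑ i ∈ Finset.Ico (d + q + 1) (n + 1), f i = 0 := by
      apply Finset.sum_eq_zero
      intro i hi; rw [Finset.mem_Ico] at hi
      have ha : ¬ i ≤ d := by omega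
      have hb : ¬ i ≤ d + q := by omega
      simp [hf, ha, hb]
    show ∑ i ∈ Finset.range (n + 1), f i = k
    rw [← hsplit, ← hsplit2, h1, h2, h3]
    omega
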